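/- For every λ > 0 and every point X on the de Sitter hyperboloid dS(λ) with X⁴ < −λ and (X¹,X²,X³) ≠ (0,0,0), there exist T ≠ 0, R > 0, θ ∈ [0,π] and ψ ∈ [0,2π) such that X = Ψ(T, R, θ, ψ); moreover on dS(λ) the condition X⁴ < −λ forces X⁰ ≠ 0, and the sign of T equals the sign of X⁰. -/

import Mathlib

set_option maxHeartbeats 1000000

/-- Minkowski quadratic form on ℝ⁵. -/
noncomputable def Q (X : Fin 5 → ℝ) : ℝ :=
  -(X 0) ^ 2 + (X 1) ^ 2 + (X 2) ^ 2 + (X 3) ^ 2 + (X 4) ^ 2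

/-- The hyperbolic chart Ψ of the de Sitter hyperboloid. -/
noncomputable def Psi (l T R θ ψ : ℝ) : Fin 5 → ℝ :=
  ![l * Real.sinh (T / l) * Real.cosh (R / l),
    l * Real.sinh (T / l) * Real.sinh (R / l) * Real.sin θ * Real.cos ψ,
    l * Real.sinh (T / l) * Real.sinh (R / l) * Real.sin θ * Real.sin ψ,
    l * Real.sinh (T / l) * Real.sinh (R / l) * Real.cos θ,
    -l * Real.cosh (T / l)]

lemma arsinh_pos' {x : ℝ} (h : 0 < x) : 0 < Real.arsinh x := by
  have := Real.arsinh_lt_arsinh.mpr h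
  rwa [Real.arsinh_zero] at this

lemma arsinh_neg' {x : ℝ} (h : x < 0) : Real.arsinh x < 0 := by
  have := Real.arsinh_lt_arsinh.mpr h
  rwa [Real.arsinh_zero] at this

/-- Every point of dS(λ) with X⁴ < −λ off the axis is in the range of the hyperbolic
chart; X⁴ < −λ forces X⁰ ≠ 0, and the sign of T equals the sign of X⁰. -/
theorem stmt11 (l : ℝ) (hl : 0 < l) (X : Fin 5 → ℝ) (hX : Q X = l ^ 2)
    (hX4 : X 4 < -l) (h3 : ¬(X 1 = 0 ∧ X 2 = 0 ∧ X 3 = 0)) :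
    X 0 ≠ 0 ∧
    ∃ T R θ ψ : ℝ, T ≠ 0 ∧ 0 < R ∧ θ ∈ Set.Icc (0 : ℝ) Real.pi ∧
      ψ ∈ Set.Ico (0 : ℝ) (2 * Real.pi) ∧
      X = Psi l T R θ ψ ∧ Real.sign T = Real.sign (X 0) := by
  have hl0 : l ≠ 0 := ne_of_gt hl
  have hr2pos : 0 < (X 1) ^ 2 + (X 2) ^ 2 + (X 3) ^ 2 := by
    rcases lt_or_eq_of_le (by positivity : (0:ℝ) ≤ (X 1) ^ 2 + (X 2) ^ 2 + (X 3) ^ 2) with h | h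
    · exact h
    · exfalso; apply h3
      refine ⟨?_, ?_, ?_⟩ <;> nlinarith [sq_nonneg (X 1), sq_nonneg (X 2), sq_nonneg (X 3)]
  have hX42 : l ^ 2 < (X 4) ^ 2 := by nlinarith
  have hX02 : (X 0) ^ 2 = (X 4) ^ 2 - l ^ 2 + ((X 1) ^ 2 + (X 2) ^ 2 + (X 3) ^ 2) := by
    simp only [Q] at hX; linarith
  have hX0ne : X 0 ≠ 0 := by
    intro h; rw [h] at hX02; nlinarith
  refine ⟨hX0ne, ?_⟩
  set a : ℝ := Real.sqrt ((X 4) ^ 2 - l ^ 2) with ha_def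
  have ha : 0 < a := Real.sqrt_pos.mpr (by linarith)
  have ha2 : a ^ 2 = (X 4) ^ 2 - l ^ 2 := Real.sq_sqrt (by linarith)
  set r : ℝ := Real.sqrt ((X 1) ^ 2 + (X 2) ^ 2 + (X 3) ^ 2) with hr_def
  have hr : 0 < r := Real.sqrt_pos.mpr hr2pos
  have hrr : r ^ 2 = (X 1) ^ 2 + (X 2) ^ 2 + (X 3) ^ 2 := Real.sq_sqrt hr2pos.le
  set s : ℝ := Real.sign (X 0) with hs_def
  have hscases : (0 < X 0 ∧ s = 1) ∨ (X 0 < 0 ∧ s = -1) := by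
    rcases lt_or_gt_of_ne hX0ne with h | h
    · exact Or.inr ⟨h, Real.sign_of_neg h⟩
    · exact Or.inl ⟨h, Real.sign_of_pos h⟩
  have hs2 : s ^ 2 = 1 := by rcases hscases with ⟨_, h⟩ | ⟨_, h⟩ <;> rw [h] <;> ring
  have hsne : s ≠ 0 := by rcases hscases with ⟨_, h⟩ | ⟨_, h⟩ <;> rw [h] <;> norm_num
  have hsabs : s * |X 0| = X 0 := by
    rcases hscases with ⟨h, hs⟩ | ⟨h, hs⟩
    · rw [hs, abs_of_pos h]; ring
    · rw [hs, abs_of_neg h]; ring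
  have hsrne : s * r ≠ 0 := mul_ne_zero hsne hr.ne'
  have hsr2 : (s * r) ^ 2 = r ^ 2 := by
    rw [mul_pow, hs2, one_mul]
  set T : ℝ := l * Real.arsinh (s * a / l) with hT_def
  set R : ℝ := l * Real.arsinh (r / a) with hR_def
  have hTl : T / l = Real.arsinh (s * a / l) := by rw [hT_def]; field_simp
  have hRl : R / l = Real.arsinh (r / a) := by rw [hR_def]; field_simp
  have hsT : Real.sinh (T / l) = s * a / l := by rw [hTl, Real.sinh_arsinh]
  have hsR : Real.sinh (R / l) = r / a := by rw [hRl, Real.sinh_arsinh]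
  have hcT : Real.cosh (T / l) = -(X 4) / l := by
    rw [hTl, Real.cosh_arsinh]
    have h1 : 1 + (s * a / l) ^ 2 = (X 4) ^ 2 / l ^ 2 := by
      rw [div_pow, mul_pow, hs2, one_mul]
      field_simp
      linarith [ha2]
    rw [h1, Real.sqrt_div (by positivity), Real.sqrt_sq_eq_abs, Real.sqrt_sq hl.le,
      abs_of_neg (by linarith : X 4 < 0)]
  have hcR : Real.cosh (R / l) = |X 0| / a := by
    rw [hRl, Real.cosh_arsinh]
    have h1 : 1 + (r / a) ^ 2 = (X 0) ^ 2 / a ^ 2 := by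
      rw [div_pow]
      field_simp
      nlinarith
    rw [h1, Real.sqrt_div (by positivity), Real.sqrt_sq_eq_abs, Real.sqrt_sq ha.le]
  -- angles
  have hX3abs : |X 3| ≤ r := by
    rw [← Real.sqrt_sq_eq_abs, hr_def]
    exact Real.sqrt_le_sqrt (by nlinarith [sq_nonneg (X 1), sq_nonneg (X 2)])
  have hsa : |s| = 1 := by rcases hscases with ⟨_, h⟩ | ⟨_, h⟩ <;> rw [h] <;> norm_num
  have hX3r : -1 ≤ X 3 / (s * r) ∧ X 3 / (s * r) ≤ 1 := by
    have h1 : |X 3 / (s * r)| ≤ 1 := by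
      rw [abs_div, abs_mul, hsa, one_mul]
      rw [abs_of_pos hr]
      exact div_le_one_of_le₀ hX3abs hr.le
    exact abs_le.mp h1
  set θ : ℝ := Real.arccos (X 3 / (s * r)) with hθ_def
  have hcosθ : Real.cos θ = X 3 / (s * r) := Real.cos_arccos hX3r.1 hX3r.2
  have hcosθ' : s * r * Real.cos θ = X 3 := by
    rw [hcosθ]; field_simp
  have hsinθ : Real.sin θ = Real.sqrt ((X 1) ^ 2 + (X 2) ^ 2) / r := by
    rw [hθ_def, Real.sin_arccos]
    have h1 : 1 - (X 3 / (s * r)) ^ 2 = ((X 1) ^ 2 + (X 2) ^ 2) / r ^ 2 := by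
      rw [div_pow, hsr2]
      field_simp
      linarith [hrr]
    rw [h1, Real.sqrt_div (by positivity), Real.sqrt_sq hr.le]
  -- the value l sinh(T/l) sinh(R/l) = s r
  have hval : l * Real.sinh (T / l) * Real.sinh (R / l) = s * r := by
    rw [hsT, hsR]; field_simp
  have hcomp0 : l * Real.sinh (T / l) * Real.cosh (R / l) = X 0 := by
    have h1 : l * (s * a / l) * (|X 0| / a) = s * |X 0| := by field_simp
    rw [hsT, hcR, h1, hsabs]
  have hcomp4 : -l * Real.cosh (T / l) = X 4 := by rw [hcT]; field_simp
  have hTne : T ≠ 0 := by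
    rcases hscases with ⟨_, hs⟩ | ⟨_, hs⟩
    · have : 0 < Real.arsinh (s * a / l) := arsinh_pos' (by rw [hs]; positivity)
      positivity
    · have h2 : Real.arsinh (s * a / l) < 0 := arsinh_neg' (by
        rw [hs]
        have : -1 * a / l < 0 := by
          apply div_neg_of_neg_of_pos _ hl; linarith
        exact this)
      rw [hT_def]; exact ne_of_lt (mul_neg_of_pos_of_neg hl h2)
  have hsignT : Real.sign T = s := by
    rcases hscases with ⟨_, hs⟩ | ⟨_, hs⟩
    · rw [hs]; apply Real.sign_of_pos
      have : 0 < Real.arsinh (s * a / l) := arsinh_pos' (by rw [hs]; positivity)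
      rw [hT_def]; positivity
    · rw [hs]; apply Real.sign_of_neg
      have h2 : Real.arsinh (s * a / l) < 0 := arsinh_neg' (by
        rw [hs]
        have : -1 * a / l < 0 := by apply div_neg_of_neg_of_pos _ hl; linarith
        exact this)
      rw [hT_def]; exact mul_neg_of_pos_of_neg hl h2
  have hRpos : 0 < R := by
    have : 0 < Real.arsinh (r / a) := arsinh_pos' (by positivity)
    rw [hR_def]; positivity
  -- choose ψ
  by_cases h12 : X 1 = 0 ∧ X 2 = 0
  · -- ψ = 0, sin θ = 0
    refine ⟨T, R, θ, 0, hTne, hRpos, ⟨Real.arccos_nonneg _, Real.arccos_le_pi _⟩,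
      ⟨le_refl _, by positivity⟩, ?_, hsignT⟩
    have hsθ0 : Real.sin θ = 0 := by rw [hsinθ, h12.1, h12.2]; simp
    funext i
    fin_cases i
    · show X 0 = l * Real.sinh (T / l) * Real.cosh (R / l)
      exact hcomp0.symm
    · show X 1 = l * Real.sinh (T / l) * Real.sinh (R / l) * Real.sin θ * Real.cos 0
      rw [hsθ0, h12.1]; ring
    · show X 2 = l * Real.sinh (T / l) * Real.sinh (R / l) * Real.sin θ * Real.sin 0
      rw [hsθ0, h12.2]; ring
    · show X 3 = l * Real.sinh (T / l) * Real.sinh (R / l) * Real.cos θ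
      rw [hval, hcosθ']
    · show X 4 = -l * Real.cosh (T / l)
      exact hcomp4.symm
  · -- ψ from complex argument
    set z : ℂ := ⟨X 1 / (s * r), X 2 / (s * r)⟩ with hz_def
    have hzne : z ≠ 0 := by
      intro h
      rw [Complex.ext_iff] at h
      simp only [Complex.zero_re, Complex.zero_im] at h
      apply h12
      constructor
      · have := h.1; simpa [hz_def, hsne, ne_of_gt hr] using this
      · have := h.2; simpa [hz_def, hsne, ne_of_gt hr] using this
    have hzabs : ‖z‖ = Real.sqrt ((X 1) ^ 2 + (X 2) ^ 2) / r := by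
      rw [Complex.norm_def, Complex.normSq_apply]
      simp only [hz_def]
      have hsr2' : s * r * (s * r) = r ^ 2 := by linear_combination r ^ 2 * hs2
      rw [show X 1 / (s * r) * (X 1 / (s * r)) + X 2 / (s * r) * (X 2 / (s * r))
          = ((X 1) ^ 2 + (X 2) ^ 2) / r ^ 2 by
        rw [div_mul_div_comm, div_mul_div_comm, hsr2']; ring]
      rw [Real.sqrt_div (by positivity), Real.sqrt_sq hr.le]
    set ψ : ℝ := if 0 ≤ Complex.arg z then Complex.arg z else Complex.arg z + 2 * Real.pi
      with hψ_def
    have hπ := Real.pi_pos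
    have hψmem : ψ ∈ Set.Ico (0 : ℝ) (2 * Real.pi) := by
      rw [hψ_def]
      split_ifs with h
      · exact ⟨h, by have := Complex.arg_le_pi z; linarith⟩
      · push_neg at h
        have := Complex.neg_pi_lt_arg z
        constructor <;> linarith
    have hcψ : Real.cos ψ = X 1 / (s * r) / ‖z‖ := by
      have h1 : Real.cos ψ = Real.cos (Complex.arg z) := by
        rw [hψ_def]; split_ifs with h
        · rfl
        · rw [Real.cos_add_two_pi]
      rw [h1, Complex.cos_arg hzne]
    have hsψ : Real.sin ψ = X 2 / (s * r) / ‖z‖ := by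
      have h1 : Real.sin ψ = Real.sin (Complex.arg z) := by
        rw [hψ_def]; split_ifs with h
        · rfl
        · rw [Real.sin_add_two_pi]
      rw [h1, Complex.sin_arg]
    have habsne : ‖z‖ ≠ 0 := by simpa using hzne
    refine ⟨T, R, θ, ψ, hTne, hRpos, ⟨Real.arccos_nonneg _, Real.arccos_le_pi _⟩,
      hψmem, ?_, hsignT⟩
    have hsθz : Real.sin θ = ‖z‖ := by rw [hsinθ, hzabs]
    funext i
    fin_cases i
    · show X 0 = l * Real.sinh (T / l) * Real.cosh (R / l)
      exact hcomp0.symm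
    · show X 1 = l * Real.sinh (T / l) * Real.sinh (R / l) * Real.sin θ * Real.cos ψ
      rw [hval, hsθz, hcψ]
      field_simp
    · show X 2 = l * Real.sinh (T / l) * Real.sinh (R / l) * Real.sin θ * Real.sin ψ
      rw [hval, hsθz, hsψ]
      field_simp
    · show X 3 = l * Real.sinh (T / l) * Real.sinh (R / l) * Real.cos θ
      rw [hval, hcosθ']
    · show X 4 = -l * Real.cosh (T / l)
      exact hcomp4.symm
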